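/- Let A and B be convex bodies in ℝ^d and let C ⊇ A and D ⊇ B be convex bodies. Then vol((A+B) \ B) ≤ vol((C+D) \ D), where A+B denotes the Minkowski sum. -/

import Mathlib

open MeasureTheory Pointwise
open scoped RealInnerProductSpace

namespace VolMinkowskiDiffMono


variable {d : ℕ}

/-- Metric projection onto a nonempty closed convex set, with its variational inequality. -/
lemma exists_proj {B : Set (EuclideanSpace ℝ (Fin d))}
    (hB : Convex ℝ B) (hBc : IsClosed B) (hBne : B.Nonempty) :
    ∃ P : EuclideanSpace ℝ (Fin d) → EuclideanSpace ℝ (Fin d),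
      (∀ y, P y ∈ B) ∧ (∀ y, ∀ w ∈ B, ⟪y - P y, w - P y⟫ ≤ 0) := by
  have h : ∀ y : EuclideanSpace ℝ (Fin d), ∃ p, p ∈ B ∧ ∀ w ∈ B, ⟪y - p, w - p⟫ ≤ 0 := by
    intro y
    obtain ⟨p, hp, hmin⟩ := exists_norm_eq_iInf_of_complete_convex hBne hBc.isComplete hB y
    exact ⟨p, hp, fun w hw => ((norm_eq_iInf_iff_real_inner_le_zero hB hp).1 hmin) w hw⟩
  choose P h1 h2 using h
  exact ⟨P, h1, h2⟩

/-- The metric projection is 1-Lipschitz, hence continuous. -/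
lemma proj_continuous {B : Set (EuclideanSpace ℝ (Fin d))}
    {P : EuclideanSpace ℝ (Fin d) → EuclideanSpace ℝ (Fin d)}
    (hmem : ∀ y, P y ∈ B) (hvar : ∀ y, ∀ w ∈ B, ⟪y - P y, w - P y⟫ ≤ 0) :
    Continuous P := by
  refine (LipschitzWith.of_dist_le_mul (K := 1) fun x y => ?_).continuous
  rw [NNReal.coe_one, one_mul, dist_eq_norm, dist_eq_norm]
  set q := P x - P y with hq
  set a := x - y with ha
  have h1 : ⟪x - P x, P y - P x⟫ ≤ 0 := hvar x (P y) (hmem y)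
  have h2 : ⟪y - P y, P x - P y⟫ ≤ 0 := hvar y (P x) (hmem x)
  have key : ⟪q, q⟫ ≤ ⟪a, q⟫ := by
    have e : ⟪a, q⟫ - ⟪q, q⟫ = (-⟪x - P x, P y - P x⟫) + (-⟪y - P y, P x - P y⟫) := by
      rw [hq, ha]
      simp only [inner_sub_left, inner_sub_right]
      rw [real_inner_comm (P y) (P x)]
      ring
    nlinarith [h1, h2]
  have hiq : ⟪q, q⟫ = ‖q‖ * ‖q‖ := real_inner_self_eq_norm_mul_norm q
  have hun : ⟪a, q⟫ ≤ ‖a‖ * ‖q‖ := real_inner_le_norm a q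
  rcases eq_or_lt_of_le (norm_nonneg q) with h0 | h0
  · rw [← h0]; exact norm_nonneg a
  · have : ‖q‖ * ‖q‖ ≤ ‖a‖ * ‖q‖ := by nlinarith
    exact le_of_mul_le_mul_right this h0



theorem core {B D : Set (EuclideanSpace ℝ (Fin d))}
    (hB : Convex ℝ B) (hBc : IsClosed B) (hBne : B.Nonempty)
    (hDm : MeasurableSet D) (hBD : B ⊆ D)
    {m : ℕ} (v : Fin (m + 1) → EuclideanSpace ℝ (Fin d)) :
    volume (D \ B)
      ≤ volume ((⋃ i, (fun x => v i + x) '' D) \ ⋃ i, (fun x => v i + x) '' B) := by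
  classical
  obtain ⟨P, hPmem, hPvar⟩ : ∃ P : EuclideanSpace ℝ (Fin d) → EuclideanSpace ℝ (Fin d),
      (∀ y, P y ∈ B) ∧ (∀ y, ∀ w ∈ B, ⟪y - P y, w - P y⟫ ≤ 0) := by
    have h : ∀ y : EuclideanSpace ℝ (Fin d), ∃ p, p ∈ B ∧ ∀ w ∈ B, ⟪y - p, w - p⟫ ≤ 0 := by
      intro y
      obtain ⟨p, hp, hmin⟩ := exists_norm_eq_iInf_of_complete_convex hBne hBc.isComplete hB y
      exact ⟨p, hp, fun w hw => ((norm_eq_iInf_iff_real_inner_le_zero hB hp).1 hmin) w hw⟩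
    choose P h1 h2 using h
    exact ⟨P, h1, h2⟩
  have hPcont : Continuous P := proj_continuous hPmem hPvar
  -- the functions g i
  set g : Fin (m + 1) → EuclideanSpace ℝ (Fin d) → ℝ := fun i y => ⟪y - P y, v i⟫ with hg
  have hgc : ∀ i, Continuous (g i) :=
    fun i => (continuous_id.sub hPcont).inner continuous_const
  -- the pieces
  set Ei : Fin (m + 1) → Set (EuclideanSpace ℝ (Fin d)) := fun i =>
    (D \ B) ∩ ((⋂ j, {y | g j y ≤ g i y}) ∩ ⋂ j, ⋂ (_ : j < i), {y | g j y < g i y}) with hEi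
  have hEim : ∀ i, MeasurableSet (Ei i) := by
    intro i
    refine (hDm.diff hBc.measurableSet).inter (MeasurableSet.inter ?_ ?_)
    · exact MeasurableSet.iInter fun j =>
        measurableSet_le (hgc j).measurable (hgc i).measurable
    · exact MeasurableSet.iInter fun j => MeasurableSet.iInter fun _ =>
        measurableSet_lt (hgc j).measurable (hgc i).measurable
  -- pieces cover D \ B
  have hcover : D \ B ⊆ ⋃ i, Ei i := by
    intro y hy
    have hSne : (Finset.univ.filter (fun i => ∀ j, g j y ≤ g i y)).Nonempty := by
      obtain ⟨i, -, hi⟩ := Finset.exists_max_image Finset.univ (fun i => g i y)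
        ⟨0, Finset.mem_univ 0⟩
      exact ⟨i, Finset.mem_filter.2 ⟨Finset.mem_univ i, fun j => hi j (Finset.mem_univ j)⟩⟩
    set S := Finset.univ.filter (fun i => ∀ j, g j y ≤ g i y)
    set i₀ := S.min' hSne with hi₀
    have hi₀S : i₀ ∈ S := S.min'_mem hSne
    have hmax : ∀ j, g j y ≤ g i₀ y := (Finset.mem_filter.1 hi₀S).2
    refine Set.mem_iUnion.2 ⟨i₀, hy, Set.mem_iInter.2 fun j => hmax j, ?_⟩
    refine Set.mem_iInter.2 fun j => Set.mem_iInter.2 fun hj => ?_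
    have hjS : j ∉ S := fun hjmem => absurd (S.min'_le j hjmem) (not_le.2 hj)
    have : ¬ ∀ k, g k y ≤ g j y := fun hall =>
      hjS (Finset.mem_filter.2 ⟨Finset.mem_univ j, hall⟩)
    push_neg at this
    obtain ⟨k, hk⟩ := this
    exact lt_of_lt_of_le hk (hmax k)
  -- basic membership facts about the pieces
  have hEiD : ∀ i, Ei i ⊆ D \ B := fun i => Set.inter_subset_left
  have hEimax : ∀ i y, y ∈ Ei i → ∀ j, g j y ≤ g i y := by
    intro i y hy j
    exact Set.mem_iInter.1 hy.2.1 j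
  have hEilt : ∀ i y, y ∈ Ei i → ∀ j, j < i → g j y < g i y := by
    intro i y hy j hj
    exact Set.mem_iInter.1 (Set.mem_iInter.1 hy.2.2 j) hj
  -- translated pieces
  set Ai : Fin (m + 1) → Set (EuclideanSpace ℝ (Fin d)) := fun i =>
    (fun x => v i + x) '' (Ei i) with hAi
  have hAim : ∀ i, MeasurableSet (Ai i) := by
    intro i
    rw [hAi]
    simp only [Set.image_add_left]
    exact (hEim i).preimage (measurable_const_add _)
  have hAivol : ∀ i, volume (Ai i) = volume (Ei i) := by
    intro i
    rw [hAi]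
    simp only [Set.image_add_left]
    exact measure_preimage_add _ _ _
  -- u ≠ 0 off B
  have hune : ∀ y, y ∉ B → y - P y ≠ 0 := by
    intro y hyB h0
    exact hyB (by rw [sub_eq_zero] at h0; rw [h0]; exact hPmem y)
  -- translated pieces land in the target set
  have hAisub : ∀ i, Ai i ⊆ (⋃ i, (fun x => v i + x) '' D) \ ⋃ i, (fun x => v i + x) '' B := by
    rintro i x ⟨y, hy, rfl⟩
    constructor
    · exact Set.mem_iUnion.2 ⟨i, Set.mem_image_of_mem _ (hEiD i hy).1⟩
    · intro hmem
      obtain ⟨j, b, hbB, heq⟩ : ∃ j b, b ∈ B ∧ v j + b = v i + y := by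
        obtain ⟨j, hj⟩ := Set.mem_iUnion.1 hmem
        obtain ⟨b, hbB, hb⟩ := hj
        exact ⟨j, b, hbB, hb⟩
      have hvar := hPvar y b hbB
      have hbexp : b - P y = (y - P y) + (v i - v j) := by
        have : b = v i + y - v j := by
          have := heq
          abel_nf
          linear_combination (norm := module) this
        rw [this]; abel
      rw [hbexp, inner_add_right] at hvar
      have hgij : (0:ℝ) ≤ ⟪y - P y, v i - v j⟫ := by
        rw [inner_sub_right]
        have := hEimax i y hy j
        simp only [hg] at this ⊢
        linarith
      have hq : ⟪y - P y, y - P y⟫ ≤ 0 := by linarith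
      exact hune y (hEiD i hy).2 (real_inner_self_nonpos.1 hq)
  -- translated pieces are pairwise disjoint
  have hAidisj : Pairwise (Function.onFun Disjoint Ai) := by
    intro i j hij
    rw [Function.onFun, Set.disjoint_left]
    rintro x ⟨y₁, hy₁, e₁⟩ ⟨y₂, hy₂, e₂⟩
    have ha : y₁ - y₂ = v j - v i := by
      have h : v i + y₁ = v j + y₂ := e₁.trans e₂.symm
      linear_combination (norm := module) h
    set u₁ := y₁ - P y₁ with hu₁
    set u₂ := y₂ - P y₂ with hu₂
    have h1 : ⟪u₁, v j - v i⟫ ≤ 0 := by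
      rw [inner_sub_right]
      have := hEimax i y₁ hy₁ j
      simp only [hg] at this
      linarith
    have h2 : (0:ℝ) ≤ ⟪u₂, v j - v i⟫ := by
      rw [inner_sub_right]
      have := hEimax j y₂ hy₂ i
      simp only [hg] at this
      linarith
    have hv1 : ⟪u₁, P y₂ - P y₁⟫ ≤ 0 := hPvar y₁ (P y₂) (hPmem y₂)
    have hv2 : ⟪u₂, P y₁ - P y₂⟫ ≤ 0 := hPvar y₂ (P y₁) (hPmem y₁)
    have huu : u₁ - u₂ = (y₁ - y₂) - (P y₁ - P y₂) := by rw [hu₁, hu₂]; abel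
    have hA1 : ⟪u₁ - u₂, y₁ - y₂⟫ ≤ 0 := by
      rw [ha, inner_sub_left]; linarith
    have hA2 : (0:ℝ) ≤ ⟪u₁ - u₂, P y₁ - P y₂⟫ := by
      rw [inner_sub_left]
      have e1 : P y₂ - P y₁ = -(P y₁ - P y₂) := by abel
      rw [e1, inner_neg_right] at hv1
      linarith
    have hkey : ⟪u₁ - u₂, u₁ - u₂⟫ ≤ 0 := by
      nth_rewrite 2 [huu]
      rw [inner_sub_right]
      linarith
    have hu : u₁ = u₂ := sub_eq_zero.1 (real_inner_self_nonpos.1 hkey)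
    have hgeq : ∀ k, g k y₁ = g k y₂ := by
      intro k
      simp only [hg, ← hu₁, ← hu₂, hu]
    rcases lt_or_gt_of_ne hij with hlt | hlt
    · have h3 := hEilt j y₂ hy₂ i hlt
      have h4 := hEimax i y₁ hy₁ j
      rw [← hgeq i, ← hgeq j] at h3
      exact absurd h4 (not_le.2 h3)
    · have h3 := hEilt i y₁ hy₁ j hlt
      have h4 := hEimax j y₂ hy₂ i
      rw [hgeq i, hgeq j] at h3
      exact absurd h4 (not_le.2 h3)
  -- put it together
  calc volume (D \ B) ≤ volume (⋃ i, Ei i) := measure_mono hcover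
    _ ≤ ∑' i, volume (Ei i) := measure_iUnion_le _
    _ = ∑' i, volume (Ai i) := tsum_congr fun i => (hAivol i).symm
    _ = volume (⋃ i, Ai i) := (measure_iUnion hAidisj hAim).symm
    _ ≤ _ := measure_mono (Set.iUnion_subset hAisub)




theorem star_ineq {B D : Set (EuclideanSpace ℝ (Fin d))}
    (hB : Convex ℝ B) (hBc : IsCompact B) (hBne : B.Nonempty)
    (hDc : IsCompact D) (hBD : B ⊆ D)
    {m : ℕ} (v : Fin (m + 1) → EuclideanSpace ℝ (Fin d)) (hv0 : v 0 = 0) :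
    volume ((⋃ i, (fun x => v i + x) '' B) \ B)
      ≤ volume ((⋃ i, (fun x => v i + x) '' D) \ D) := by
  classical
  set UB := ⋃ i, (fun x => v i + x) '' B with hUB
  set UD := ⋃ i, (fun x => v i + x) '' D with hUD
  -- basic inclusions
  have hBUB : B ⊆ UB := by
    intro x hx
    refine Set.mem_iUnion.2 ⟨0, ⟨x, hx, ?_⟩⟩
    simp [hv0]
  have hDUD : D ⊆ UD := by
    intro x hx
    refine Set.mem_iUnion.2 ⟨0, ⟨x, hx, ?_⟩⟩
    simp [hv0]
  have hUBUD : UB ⊆ UD := by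
    refine Set.iUnion_subset fun i => ?_
    exact (Set.image_mono hBD).trans (Set.subset_iUnion_of_subset i subset_rfl)
  -- compactness / measurability
  have hUBc : IsCompact UB := by
    rw [hUB]
    apply isCompact_iUnion
    exact fun i => hBc.image (continuous_const.add continuous_id)
  have hUDc : IsCompact UD := by
    rw [hUD]
    apply isCompact_iUnion
    exact fun i => hDc.image (continuous_const.add continuous_id)
  have hBm : MeasurableSet B := hBc.isClosed.measurableSet
  have hDm : MeasurableSet D := hDc.isClosed.measurableSet
  have hUBm : MeasurableSet UB := hUBc.isClosed.measurableSet
  have hUDm : MeasurableSet UD := hUDc.isClosed.measurableSet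
  -- names for the four measures
  set m1 := volume (D \ UB) with hm1
  set m2 := volume ((D ∩ UB) \ B) with hm2
  set m3 := volume (UD \ (D ∪ UB)) with hm3
  set m4 := volume (UB \ D) with hm4
  have hm1fin : m1 ≠ ⊤ := by
    rw [hm1]
    exact ((measure_mono (Set.diff_subset.trans hDUD)).trans_lt hUDc.measure_lt_top).ne
  -- key inequality from `core`
  have hcore : volume (D \ B) ≤ volume (UD \ UB) :=
    core hB hBc.isClosed hBne hDm hBD v
  -- eq1 : volume (D \ B) = m1 + m2
  have e1 : D \ B = (D \ UB) ∪ ((D ∩ UB) \ B) := by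
    ext x
    have h1 : x ∈ B → x ∈ UB := fun h => hBUB h
    simp only [Set.mem_diff, Set.mem_union, Set.mem_inter_iff]
    tauto
  have d1 : Disjoint (D \ UB) ((D ∩ UB) \ B) := by
    rw [Set.disjoint_left]
    rintro x ⟨-, hx2⟩ ⟨⟨-, hx3⟩, -⟩
    exact hx2 hx3
  have eq1 : volume (D \ B) = m1 + m2 := by
    rw [e1, measure_union d1 ((hDm.inter hUBm).diff hBm)]
  -- eq2 : volume (UD \ UB) = m3 + m1
  have e2 : UD \ UB = (UD \ (D ∪ UB)) ∪ (D \ UB) := by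
    ext x
    have h1 : x ∈ D → x ∈ UD := fun h => hDUD h
    simp only [Set.mem_diff, Set.mem_union, Set.mem_inter_iff]
    tauto
  have d2 : Disjoint (UD \ (D ∪ UB)) (D \ UB) := by
    rw [Set.disjoint_left]
    rintro x ⟨-, hx2⟩ ⟨hx3, -⟩
    exact hx2 (Or.inl hx3)
  have eq2 : volume (UD \ UB) = m3 + m1 := by
    rw [e2, measure_union d2 (hDm.diff hUBm)]
  -- cancel m1 : m2 ≤ m3
  have hm23 : m2 ≤ m3 := by
    have h := hcore
    rw [eq1, eq2] at h
    rw [← ENNReal.add_le_add_iff_right hm1fin]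
    calc m2 + m1 = m1 + m2 := add_comm _ _
      _ ≤ m3 + m1 := h
  -- eq3 : volume (UB \ B) = m4 + m2
  have e3 : UB \ B = (UB \ D) ∪ ((D ∩ UB) \ B) := by
    ext x
    have h1 : x ∈ B → x ∈ D := fun h => hBD h
    simp only [Set.mem_diff, Set.mem_union, Set.mem_inter_iff]
    tauto
  have d3 : Disjoint (UB \ D) ((D ∩ UB) \ B) := by
    rw [Set.disjoint_left]
    rintro x ⟨-, hx2⟩ ⟨⟨hx3, -⟩, -⟩
    exact hx2 hx3
  have eq3 : volume (UB \ B) = m4 + m2 := by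
    rw [e3, measure_union d3 ((hDm.inter hUBm).diff hBm)]
  -- eq4 : m4 + m3 ≤ volume (UD \ D)
  have e4 : (UB \ D) ∪ (UD \ (D ∪ UB)) ⊆ UD \ D := by
    rintro x (⟨hx1, hx2⟩ | ⟨hx1, hx2⟩)
    · exact ⟨hUBUD hx1, hx2⟩
    · exact ⟨hx1, fun h => hx2 (Or.inl h)⟩
  have d4 : Disjoint (UB \ D) (UD \ (D ∪ UB)) := by
    rw [Set.disjoint_left]
    rintro x ⟨hx1, -⟩ ⟨-, hx2⟩
    exact hx2 (Or.inr hx1)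
  have eq4 : m4 + m3 ≤ volume (UD \ D) := by
    rw [← measure_union d4 (hUDm.diff (hDm.union hUBm))]
    exact measure_mono e4
  calc volume (UB \ B) = m4 + m2 := eq3
    _ ≤ m4 + m3 := add_le_add_right hm23 _
    _ ≤ volume (UD \ D) := eq4



lemma exists_dense_seq {A : Set (EuclideanSpace ℝ (Fin d))} (hAne : A.Nonempty) :
    ∃ T : ℕ → EuclideanSpace ℝ (Fin d), (∀ n, T n ∈ A) ∧
      ∀ x ∈ A, ∀ ε : ℝ, 0 < ε → ∃ n, dist x (T n) < ε := by
  haveI : Nonempty ↥A := hAne.to_subtype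
  obtain ⟨s, hsc, hsd⟩ := TopologicalSpace.exists_countable_dense ↥A
  have hsne : s.Nonempty := hsd.nonempty
  have hTc : (Subtype.val '' s : Set (EuclideanSpace ℝ (Fin d))).Countable := hsc.image _
  have hTne : (Subtype.val '' s).Nonempty := hsne.image _
  obtain ⟨T, hT⟩ := Set.Countable.exists_eq_range hTc hTne
  refine ⟨T, ?_, ?_⟩
  · intro n
    have hmem : T n ∈ Subtype.val '' s := by rw [hT]; exact Set.mem_range_self n
    obtain ⟨y, -, hy⟩ := hmem
    rw [← hy]; exact y.2
  · intro x hx ε hε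
    obtain ⟨y, hyb, hys⟩ := Metric.dense_iff.1 hsd ⟨x, hx⟩ ε hε
    have : (y : EuclideanSpace ℝ (Fin d)) ∈ Subtype.val '' s := ⟨y, hys, rfl⟩
    rw [hT] at this
    obtain ⟨n, hn⟩ := this
    refine ⟨n, ?_⟩
    rw [hn]
    have h2 := Metric.mem_ball.1 hyb
    rw [Subtype.dist_eq] at h2
    rw [dist_comm] at h2
    exact h2

lemma interior_cover {A B : Set (EuclideanSpace ℝ (Fin d))}
    (hA : Convex ℝ A) (hB : Convex ℝ B)
    {a₀ : EuclideanSpace ℝ (Fin d)} (ha₀ : a₀ ∈ A)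
    {b₀ : EuclideanSpace ℝ (Fin d)} {δ : ℝ} (hδ : 0 < δ) (hball : Metric.ball b₀ δ ⊆ B)
    {T : ℕ → EuclideanSpace ℝ (Fin d)}
    (hdense : ∀ x ∈ A, ∀ ε : ℝ, 0 < ε → ∃ n, dist x (T n) < ε) :
    interior (A + B) ⊆ ⋃ n, (fun x => T n + x) '' B := by
  intro x hx
  obtain ⟨ρ, hρ, hsub⟩ := Metric.isOpen_iff.1 isOpen_interior x hx
  set w := a₀ + b₀ with hw
  have hnorm : (0:ℝ) ≤ ‖x - w‖ := norm_nonneg _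
  obtain ⟨t, htpos, htρ⟩ : ∃ t : ℝ, 0 < t ∧ t * ‖x - w‖ < ρ := by
    refine ⟨ρ / (2 * (ρ + ‖x - w‖)), by positivity, ?_⟩
    rw [div_mul_eq_mul_div, div_lt_iff₀ (by positivity)]
    nlinarith
  set z := x + t • (x - w) with hz
  have hzS : z ∈ A + B := by
    have : z ∈ Metric.ball x ρ := by
      rw [Metric.mem_ball, hz, dist_self_add_left, norm_smul, Real.norm_eq_abs,
        abs_of_pos htpos]
      exact htρ
    exact interior_subset (hsub this)
  obtain ⟨a, ha, b, hb, hab⟩ := Set.mem_add.1 hzS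
  have h1t : (0:ℝ) < 1 + t := by linarith
  have h1tne : (1:ℝ) + t ≠ 0 := ne_of_gt h1t
  set lam := 1 / (1 + t) with hlam
  set mu := t / (1 + t) with hmu
  have hlampos : 0 < lam := by rw [hlam]; positivity
  have hmupos : 0 < mu := by rw [hmu]; positivity
  have hlm : lam + mu = 1 := by rw [hlam, hmu]; field_simp
  have hmu_eq : lam * t = mu := by rw [hlam, hmu]; ring
  have hmune : mu ≠ 0 := ne_of_gt hmupos
  clear_value lam mu
  clear hlam hmu
  have hlt : lam + lam * t = 1 := by rw [hmu_eq]; exact hlm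
  -- x = lam • z + mu • w
  have hxzw : x = lam • z + mu • w := by
    have e : lam • z + mu • w = (lam + lam * t) • x + (mu - lam * t) • w := by
      rw [hz]; module
    rw [e, hlt, one_smul, ← hmu_eq, sub_self, zero_smul, add_zero]
  set ta := lam • a + mu • a₀ with hta
  set tb := lam • b + mu • b₀ with htb
  have htaA : ta ∈ A := hA ha ha₀ (le_of_lt hlampos) (le_of_lt hmupos) hlm
  have hxab : x = ta + tb := by
    rw [hxzw, ← hab, hw, hta, htb]
    rw [smul_add, smul_add]
    abel
  -- points within mu * δ of tb are in B
  have hBball : ∀ y : EuclideanSpace ℝ (Fin d), dist y tb < mu * δ → y ∈ B := by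
    intro y hy
    have hyd : y = lam • b + mu • (b₀ + mu⁻¹ • (y - tb)) := by
      rw [smul_add, smul_inv_smul₀ hmune, htb]
      abel
    rw [hyd]
    refine hB hb (hball ?_) (le_of_lt hlampos) (le_of_lt hmupos) hlm
    rw [Metric.mem_ball, dist_self_add_left, norm_smul, Real.norm_eq_abs,
      abs_of_pos (inv_pos.2 hmupos)]
    rw [dist_eq_norm] at hy
    rw [inv_mul_lt_iff₀ hmupos]
    exact hy
  obtain ⟨n, hn⟩ := hdense ta htaA (mu * δ) (by positivity)
  refine Set.mem_iUnion.2 ⟨n, ⟨x - T n, ?_, by simp⟩⟩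
  refine hBball _ ?_
  have he : x - T n - tb = ta - T n := by rw [hxab]; abel
  rw [dist_eq_norm, he, ← dist_eq_norm]
  exact hn


end VolMinkowskiDiffMono

open VolMinkowskiDiffMono in
/-- Monotonicity of the volume of the Minkowski-sum difference body: for convex bodies
`A ⊆ C` and `B ⊆ D` in `ℝ^d`, `vol((A+B) \ B) ≤ vol((C+D) \ D)`. -/
theorem vol_minkowski_diff_mono (d : ℕ)
    (A B C D : Set (EuclideanSpace ℝ (Fin d)))
    (hA : Convex ℝ A) (hAc : IsCompact A) (hAi : (interior A).Nonempty)
    (hB : Convex ℝ B) (hBc : IsCompact B) (hBi : (interior B).Nonempty)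
    (hC : Convex ℝ C) (hCc : IsCompact C) (hCi : (interior C).Nonempty)
    (hD : Convex ℝ D) (hDc : IsCompact D) (hDi : (interior D).Nonempty)
    (hAC : A ⊆ C) (hBD : B ⊆ D) :
    volume ((A + B) \ B) ≤ volume ((C + D) \ D) := by
  classical
  have hBne : B.Nonempty := hBi.mono interior_subset
  have hAne : A.Nonempty := hAi.mono interior_subset
  obtain ⟨b₀, hb₀i⟩ := hBi
  obtain ⟨δ, hδ, hball⟩ : ∃ δ, 0 < δ ∧ Metric.ball b₀ δ ⊆ B := by
    obtain ⟨δ, hδ, hb⟩ := Metric.isOpen_iff.1 isOpen_interior b₀ hb₀i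
    exact ⟨δ, hδ, hb.trans interior_subset⟩
  obtain ⟨T, hTA, hTdense⟩ := exists_dense_seq hAne
  -- the finite families of translations
  set vfam : (n : ℕ) → Fin (n + 1 + 1) → EuclideanSpace ℝ (Fin d) :=
    fun n => Fin.cases 0 (fun k : Fin (n + 1) => T (k : ℕ)) with hvfam
  have hv0 : ∀ n, vfam n 0 = 0 := fun n => rfl
  set UB : ℕ → Set (EuclideanSpace ℝ (Fin d)) :=
    fun n => ⋃ i, (fun x => vfam n i + x) '' B with hUBdef
  set UD : ℕ → Set (EuclideanSpace ℝ (Fin d)) :=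
    fun n => ⋃ i, (fun x => vfam n i + x) '' D with hUDdef
  -- monotonicity of the unions
  have hUBmono : Monotone fun n => UB n \ B := by
    intro n m hnm
    refine Set.diff_subset_diff_left ?_
    intro x hx
    obtain ⟨i, y, hy, rfl⟩ : ∃ i y, y ∈ B ∧ vfam n i + y = x := by
      obtain ⟨i, hi⟩ := Set.mem_iUnion.1 hx
      obtain ⟨y, hy, he⟩ := hi
      exact ⟨i, y, hy, he⟩
    induction i using Fin.cases with
    | zero => exact Set.mem_iUnion.2 ⟨0, ⟨y, hy, by simp [hvfam]⟩⟩
    | succ k =>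
      refine Set.mem_iUnion.2 ⟨Fin.succ ⟨(k : ℕ), by omega⟩, ⟨y, hy, ?_⟩⟩
      simp only [hvfam, Fin.cases_succ, Fin.cases_succ']
  -- frontier of A+B is null
  have hSconv : Convex ℝ (A + B) := hA.add hB
  have hScomp : IsCompact (A + B) := hAc.add hBc
  have hfront : volume (frontier (A + B)) = 0 := hSconv.addHaar_frontier volume
  -- step 1 : pass to the interior
  have sub1 : (A + B) \ B ⊆ (interior (A + B) \ B) ∪ frontier (A + B) := by
    rintro x ⟨hxS, hxB⟩
    have hxc : x ∈ closure (A + B) := subset_closure hxS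
    rw [closure_eq_interior_union_frontier] at hxc
    rcases hxc with h | h
    · exact Or.inl ⟨h, hxB⟩
    · exact Or.inr h
  -- step 2 : the interior is covered by countably many translates
  have sub2 : interior (A + B) \ B ⊆ ⋃ n, (UB n \ B) := by
    rintro x ⟨hxI, hxB⟩
    obtain ⟨n, hn⟩ := Set.mem_iUnion.1 (interior_cover hA hB (hTA 0) hδ hball hTdense hxI)
    refine Set.mem_iUnion.2 ⟨n, ⟨?_, hxB⟩⟩
    refine Set.mem_iUnion.2 ⟨Fin.succ ⟨n, by omega⟩, ?_⟩
    obtain ⟨y, hy, he⟩ := hn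
    refine ⟨y, hy, ?_⟩
    simp only [hvfam, Fin.cases_succ, Fin.cases_succ']
    exact he
  -- step 3 : each UD n \ D is inside (C+D) \ D
  have sub3 : ∀ n, UD n \ D ⊆ (C + D) \ D := by
    intro n x hx
    obtain ⟨hx1, hx2⟩ := hx
    obtain ⟨i, y, hy, he⟩ : ∃ i y, y ∈ D ∧ vfam n i + y = x := by
      obtain ⟨i, hi⟩ := Set.mem_iUnion.1 hx1
      obtain ⟨y, hy, he⟩ := hi
      exact ⟨i, y, hy, he⟩
    refine ⟨?_, hx2⟩
    induction i using Fin.cases with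
    | zero =>
      exfalso
      apply hx2
      have : x = y := by rw [← he]; simp [hvfam]
      rw [this]; exact hy
    | succ k =>
      have hTC : vfam n (Fin.succ k) ∈ C := by
        have : vfam n (Fin.succ k) = T (k : ℕ) := by simp [hvfam]
        rw [this]; exact hAC (hTA (k : ℕ))
      rw [← he]
      exact Set.add_mem_add hTC hy
  -- directedness
  have hdir : Directed (· ⊆ ·) fun n => UB n \ B := hUBmono.directed_le
  calc volume ((A + B) \ B)
      ≤ volume ((interior (A + B) \ B) ∪ frontier (A + B)) := measure_mono sub1
    _ ≤ volume (interior (A + B) \ B) + volume (frontier (A + B)) := measure_union_le _ _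
    _ = volume (interior (A + B) \ B) := by rw [hfront, add_zero]
    _ ≤ volume (⋃ n, (UB n \ B)) := measure_mono sub2
    _ = ⨆ n, volume (UB n \ B) := Directed.measure_iUnion hdir
    _ ≤ volume ((C + D) \ D) := by
        refine iSup_le fun n => ?_
        calc volume (UB n \ B) ≤ volume (UD n \ D) :=
              star_ineq hB hBc hBne hDc hBD (vfam n) (hv0 n)
          _ ≤ volume ((C + D) \ D) := measure_mono (sub3 n)
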